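/- Let π ∈ I_k, let ρ be a k-rigid permutation, and let f, g : ρ → π be two embeddings of ρ in π. For each x ∈ ρ the points f(x) and g(x) have equal rank, hence coincide or form a 12 pattern, so their infimum (the earlier-and-smaller point) and supremum (the later-and-larger point) are defined. Then the maps I(x) = inf(f(x), g(x)) and S(x) = sup(f(x), g(x)) are also embeddings of ρ in π. In particular, the set of embeddings of ρ in π forms a distributive lattice under these pointwise operations. -/

import Mathlib

/-- `f` is an embedding (involvement) of the permutation `α` into the permutation `π`:
it is strictly monotone on positions and preserves the relative order of values. -/
def IsEmbedding {m n : ℕ} (α : Equiv.Perm (Fin m)) (π : Equiv.Perm (Fin n))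
    (f : Fin m → Fin n) : Prop :=
  StrictMono f ∧ ∀ a b : Fin m, α a < α b ↔ π (f a) < π (f b)

/-- `π` contains a decreasing subsequence of length `k`.  Permutations avoiding
`δ_{k+1}` (i.e. members of `I_k`) are those with `¬ HasDecSeq π (k+1)`. -/
def HasDecSeq {n : ℕ} (π : Equiv.Perm (Fin n)) (k : ℕ) : Prop :=
  ∃ q : Fin k → Fin n, StrictMono q ∧ StrictAnti fun i => π (q i)

/-- There is a decreasing subsequence of `π` of length `t` whose maximum element is
the point at position `p`. -/
def DecSeqFrom {n : ℕ} (π : Equiv.Perm (Fin n)) (p : Fin n) (t : ℕ) : Prop :=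
  ∃ q : Fin t → Fin n, StrictMono q ∧ (StrictAnti fun i => π (q i)) ∧
    (∀ i, p ≤ q i) ∧ ∃ i, q i = p

/-- The rank of the element of `π` at position `p`. -/
noncomputable def rankAt {n : ℕ} (π : Equiv.Perm (Fin n)) (p : Fin n) : ℕ :=
  sSup {t | DecSeqFrom π p t}

/-- `π` is `k`-rigid: every element belongs to a subset whose pattern is `δ_k`. -/
def KRigid {n : ℕ} (k : ℕ) (π : Equiv.Perm (Fin n)) : Prop :=
  ∀ p : Fin n, ∃ q : Fin k → Fin n, StrictMono q ∧
    (StrictAnti fun i => π (q i)) ∧ ∃ i, q i = p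

section Aux

variable {n : ℕ} {π : Equiv.Perm (Fin n)}

lemma hasDecSeq_mono {s t : ℕ} (h : HasDecSeq π t) (hst : s ≤ t) : HasDecSeq π s := by
  obtain ⟨q, h1, h2⟩ := h
  exact ⟨fun i => q (Fin.castLE hst i), fun i j hij => h1 hij, fun i j hij => h2 hij⟩

lemma decSeqFrom_hasDecSeq {p : Fin n} {t : ℕ} (h : DecSeqFrom π p t) : HasDecSeq π t := by
  obtain ⟨q, h1, h2, _, _⟩ := h
  exact ⟨q, h1, h2⟩

lemma decSeqFrom_le {k : ℕ} (hπ : ¬ HasDecSeq π (k + 1)) {p : Fin n} {t : ℕ}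
    (h : DecSeqFrom π p t) : t ≤ k := by
  by_contra h'
  exact hπ (hasDecSeq_mono (decSeqFrom_hasDecSeq h) (by omega))

lemma decSeqFrom_one (p : Fin n) : DecSeqFrom π p 1 := by
  refine ⟨fun _ => p, ?_, ?_, fun _ => le_refl _, ⟨0, rfl⟩⟩
  · intro i j hij
    exact absurd (Subsingleton.elim i j) (ne_of_lt hij)
  · intro i j hij
    exact absurd (Subsingleton.elim i j) (ne_of_lt hij)

lemma rank_mem {k : ℕ} (hπ : ¬ HasDecSeq π (k + 1)) (p : Fin n) :
    DecSeqFrom π p (rankAt π p) := by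
  have hne : Set.Nonempty {t | DecSeqFrom π p t} := ⟨1, decSeqFrom_one p⟩
  have hbdd : BddAbove {t | DecSeqFrom π p t} := ⟨k, fun t ht => decSeqFrom_le hπ ht⟩
  exact Nat.sSup_mem hne hbdd

lemma le_rank {k : ℕ} (hπ : ¬ HasDecSeq π (k + 1)) {p : Fin n} {t : ℕ}
    (h : DecSeqFrom π p t) : t ≤ rankAt π p :=
  le_csSup ⟨k, fun t ht => decSeqFrom_le hπ ht⟩ h

lemma decSeqFrom_first_le {p : Fin n} {t : ℕ} {w : Fin t → Fin n}
    (h1 : StrictMono w) (h2 : StrictAnti fun i => π (w i)) (h3 : ∀ i, p ≤ w i)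
    (h4 : ∃ i, w i = p) : ∀ i, π (w i) ≤ π p := by
  intro i
  obtain ⟨i0, hi0⟩ := h4
  have ht : 0 < t := i.pos
  have hw0 : w ⟨0, ht⟩ = p := by
    refine le_antisymm ?_ (h3 _)
    calc w ⟨0, ht⟩ ≤ w i0 := h1.monotone (by simp [Fin.le_def])
    _ = p := hi0
  calc π (w i) ≤ π (w ⟨0, ht⟩) := h2.antitone (by simp [Fin.le_def])
  _ = π p := by rw [hw0]

lemma decSeqFrom_prepend {p p' : Fin n} {t : ℕ} (hpos : p < p') (hval : π p' < π p)
    (h : DecSeqFrom π p' t) : DecSeqFrom π p (t + 1) := by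
  obtain ⟨w, h1, h2, h3, h4⟩ := h
  have hvw : ∀ i, π (w i) ≤ π p' := decSeqFrom_first_le h1 h2 h3 h4
  refine ⟨fun i => if h : (i : ℕ) = 0 then p else w ⟨(i : ℕ) - 1, by omega⟩, ?_, ?_, ?_, ?_⟩
  · intro a b hab
    rcases Nat.eq_zero_or_pos (a : ℕ) with ha | ha
    · rcases Nat.eq_zero_or_pos (b : ℕ) with hb | hb
      · exact absurd (Fin.ext (hb ▸ ha)) (ne_of_lt hab)
      · simp only [ha, hb.ne', dif_pos, dif_neg, not_false_iff]
        exact lt_of_lt_of_le hpos (h3 _)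
    · have hb : 0 < (b : ℕ) := by omega
      simp only [ha.ne', hb.ne', dif_neg, not_false_iff]
      exact h1 (by simp only [Fin.mk_lt_mk]; omega)
  · intro a b hab
    rcases Nat.eq_zero_or_pos (a : ℕ) with ha | ha
    · rcases Nat.eq_zero_or_pos (b : ℕ) with hb | hb
      · exact absurd (Fin.ext (hb ▸ ha)) (ne_of_lt hab)
      · simp only [ha, hb.ne', dif_pos, dif_neg, not_false_iff]
        exact lt_of_le_of_lt (hvw _) hval
    · have hb : 0 < (b : ℕ) := by omega
      simp only [ha.ne', hb.ne', dif_neg, not_false_iff]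
      exact h2 (show (⟨(a:ℕ)-1, _⟩ : Fin t) < ⟨(b:ℕ)-1, _⟩ by simp only [Fin.mk_lt_mk]; omega)
  · intro i
    dsimp only
    split
    · exact le_refl _
    · exact le_trans hpos.le (h3 _)
  · exact ⟨⟨0, by omega⟩, by simp⟩

lemma hasDecSeq_concat {j t : ℕ} {p : Fin n} {q' : Fin j → Fin n}
    (h1 : StrictMono q') (h2 : StrictAnti fun i => π (q' i))
    (h3 : ∀ i, q' i < p) (h4 : ∀ i, π p < π (q' i))
    (h : DecSeqFrom π p t) : HasDecSeq π (j + t) := by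
  obtain ⟨w, hw1, hw2, hw3, hw4⟩ := h
  have hvw : ∀ i, π (w i) ≤ π p := decSeqFrom_first_le hw1 hw2 hw3 hw4
  refine ⟨fun i => if h : (i : ℕ) < j then q' ⟨(i : ℕ), h⟩ else w ⟨(i : ℕ) - j, by omega⟩,
    ?_, ?_⟩
  · intro a b hab
    by_cases ha : (a : ℕ) < j
    · by_cases hb : (b : ℕ) < j
      · simp only [ha, hb, dif_pos]
        exact h1 (by simp only [Fin.mk_lt_mk]; exact hab)
      · simp only [ha, hb, dif_pos, dif_neg, not_false_iff]
        exact lt_of_lt_of_le (h3 _) (hw3 _)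
    · have hb : ¬ (b : ℕ) < j := by omega
      simp only [ha, hb, dif_neg, not_false_iff]
      exact hw1 (show (⟨(a:ℕ)-j, _⟩ : Fin t) < ⟨(b:ℕ)-j, _⟩ by simp only [Fin.mk_lt_mk]; omega)
  · intro a b hab
    by_cases ha : (a : ℕ) < j
    · by_cases hb : (b : ℕ) < j
      · simp only [ha, hb, dif_pos]
        exact h2 (show (⟨(a:ℕ), ha⟩ : Fin j) < ⟨(b:ℕ), hb⟩ from hab)
      · simp only [ha, hb, dif_pos, dif_neg, not_false_iff]
        exact lt_of_le_of_lt (hvw _) (h4 _)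
    · have hb : ¬ (b : ℕ) < j := by omega
      simp only [ha, hb, dif_neg, not_false_iff]
      exact hw2 (show (⟨(a:ℕ)-j, _⟩ : Fin t) < ⟨(b:ℕ)-j, _⟩ by simp only [Fin.mk_lt_mk]; omega)

end Aux

lemma embed_decSeq {m n : ℕ} {ρ : Equiv.Perm (Fin m)} {π : Equiv.Perm (Fin n)}
    {f : Fin m → Fin n} (hf : IsEmbedding ρ π f) {x : Fin m} {t : ℕ}
    (h : DecSeqFrom ρ x t) : DecSeqFrom π (f x) t := by
  obtain ⟨q, h1, h2, h3, i0, hi0⟩ := h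
  refine ⟨fun i => f (q i), hf.1.comp h1, ?_, fun i => hf.1.monotone (h3 i), ⟨i0, congrArg f hi0⟩⟩
  intro a b hab
  exact (hf.2 (q b) (q a)).1 (h2 hab)

lemma rank_preserved {m n k : ℕ} {ρ : Equiv.Perm (Fin m)} {π : Equiv.Perm (Fin n)}
    (hπ : ¬ HasDecSeq π (k + 1)) (hρ : ¬ HasDecSeq ρ (k + 1)) (hrig : KRigid k ρ)
    {f : Fin m → Fin n} (hf : IsEmbedding ρ π f) (x : Fin m) :
    rankAt π (f x) = rankAt ρ x := by
  obtain ⟨q, hq1, hq2, jx, hjx⟩ := hrig x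
  have hjk : (jx : ℕ) < k := jx.isLt
  have hsuffix : DecSeqFrom ρ x (k - (jx : ℕ)) := by
    refine ⟨fun i => q ⟨(jx : ℕ) + (i : ℕ), by omega⟩, ?_, ?_, ?_, ?_⟩
    · intro a b hab
      exact hq1 (by simp only [Fin.mk_lt_mk]; omega)
    · intro a b hab
      exact hq2 (show (⟨(jx:ℕ)+(a:ℕ), _⟩ : Fin k) < ⟨(jx:ℕ)+(b:ℕ), _⟩ by
        simp only [Fin.mk_lt_mk]; omega)
    · intro i
      calc x = q jx := hjx.symm
      _ ≤ q ⟨(jx : ℕ) + (i : ℕ), _⟩ := hq1.monotone (by rw [Fin.le_def]; exact Nat.le_add_right _ _)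
    · refine ⟨⟨0, by omega⟩, ?_⟩
      have h0 : (⟨(jx : ℕ) + ((⟨0, by omega⟩ : Fin (k - (jx:ℕ))) : ℕ), by omega⟩ : Fin k) = jx :=
        Fin.ext (by simp)
      show q _ = x
      rw [h0, hjx]
  have hle1 : k - (jx : ℕ) ≤ rankAt ρ x := le_rank hρ hsuffix
  have hle2 : rankAt ρ x ≤ rankAt π (f x) := le_rank hπ (embed_decSeq hf (rank_mem hρ x))
  have hconcat : HasDecSeq π ((jx : ℕ) + rankAt π (f x)) := by
    refine hasDecSeq_concat (q' := fun i : Fin (jx : ℕ) => f (q ⟨(i : ℕ), by omega⟩))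
      ?_ ?_ ?_ ?_ (rank_mem hπ (f x))
    · intro a b hab
      exact hf.1 (hq1 (by simp only [Fin.mk_lt_mk]; exact hab))
    · intro a b hab
      exact (hf.2 _ _).1 (hq2 (show (⟨(a:ℕ), _⟩ : Fin k) < ⟨(b:ℕ), _⟩ from hab))
    · intro i
      have : q ⟨(i : ℕ), by omega⟩ < x := by
        rw [← hjx]
        exact hq1 (by rw [Fin.lt_def]; exact i.isLt)
      exact hf.1 this
    · intro i
      have : ρ x < ρ (q ⟨(i : ℕ), by omega⟩) := by
        rw [← hjx]
        exact hq2 (show (⟨(i:ℕ), _⟩ : Fin k) < jx by simp only [Fin.lt_def]; omega)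
      exact (hf.2 _ _).1 this
  have hlek : (jx : ℕ) + rankAt π (f x) ≤ k := by
    by_contra h'
    exact hπ (hasDecSeq_mono hconcat (by omega))
  omega

lemma embed_comparable {m n k : ℕ} {ρ : Equiv.Perm (Fin m)} {π : Equiv.Perm (Fin n)}
    (hπ : ¬ HasDecSeq π (k + 1)) (hρ : ¬ HasDecSeq ρ (k + 1)) (hrig : KRigid k ρ)
    {f g : Fin m → Fin n} (hf : IsEmbedding ρ π f) (hg : IsEmbedding ρ π g) (x : Fin m) :
    (f x ≤ g x ∧ π (f x) ≤ π (g x)) ∨ (g x ≤ f x ∧ π (g x) ≤ π (f x)) := by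
  have hr : rankAt π (f x) = rankAt π (g x) := by
    rw [rank_preserved hπ hρ hrig hf x, rank_preserved hπ hρ hrig hg x]
  rcases lt_trichotomy (f x) (g x) with h | h | h
  · left
    refine ⟨h.le, ?_⟩
    by_contra hv
    push_neg at hv
    have := le_rank hπ (decSeqFrom_prepend h hv (rank_mem hπ (g x)))
    omega
  · left
    exact ⟨h.le, by rw [h]⟩
  · right
    refine ⟨h.le, ?_⟩
    by_contra hv
    push_neg at hv
    have := le_rank hπ (decSeqFrom_prepend h hv (rank_mem hπ (f x)))
    omega

lemma min_embedding {m n k : ℕ} {ρ : Equiv.Perm (Fin m)} {π : Equiv.Perm (Fin n)}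
    (hπ : ¬ HasDecSeq π (k + 1)) (hρ : ¬ HasDecSeq ρ (k + 1)) (hrig : KRigid k ρ)
    {f g : Fin m → Fin n} (hf : IsEmbedding ρ π f) (hg : IsEmbedding ρ π g) :
    IsEmbedding ρ π (fun x => min (f x) (g x)) := by
  have hπmin : ∀ x, π (min (f x) (g x)) = min (π (f x)) (π (g x)) := by
    intro x
    rcases embed_comparable hπ hρ hrig hf hg x with ⟨h1, h2⟩ | ⟨h1, h2⟩
    · rw [min_eq_left h1, min_eq_left h2]
    · rw [min_eq_right h1, min_eq_right h2]
  have key : ∀ a b, ρ a < ρ b →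
      π (min (f a) (g a)) < π (min (f b) (g b)) := by
    intro a b hab
    rw [hπmin, hπmin]
    exact lt_min ((min_le_left _ _).trans_lt ((hf.2 a b).1 hab))
      ((min_le_right _ _).trans_lt ((hg.2 a b).1 hab))
  constructor
  · intro a b hab
    exact lt_min ((min_le_left _ _).trans_lt (hf.1 hab))
      ((min_le_right _ _).trans_lt (hg.1 hab))
  · intro a b
    constructor
    · exact key a b
    · intro h
      rcases lt_trichotomy (ρ a) (ρ b) with h' | h' | h'
      · exact h'
      · exact absurd (ρ.injective h' ▸ h) (lt_irrefl _)
      · exact absurd h (asymm (key b a h'))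

lemma max_embedding {m n k : ℕ} {ρ : Equiv.Perm (Fin m)} {π : Equiv.Perm (Fin n)}
    (hπ : ¬ HasDecSeq π (k + 1)) (hρ : ¬ HasDecSeq ρ (k + 1)) (hrig : KRigid k ρ)
    {f g : Fin m → Fin n} (hf : IsEmbedding ρ π f) (hg : IsEmbedding ρ π g) :
    IsEmbedding ρ π (fun x => max (f x) (g x)) := by
  have hπmax : ∀ x, π (max (f x) (g x)) = max (π (f x)) (π (g x)) := by
    intro x
    rcases embed_comparable hπ hρ hrig hf hg x with ⟨h1, h2⟩ | ⟨h1, h2⟩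
    · rw [max_eq_right h1, max_eq_right h2]
    · rw [max_eq_left h1, max_eq_left h2]
  have key : ∀ a b, ρ a < ρ b →
      π (max (f a) (g a)) < π (max (f b) (g b)) := by
    intro a b hab
    rw [hπmax, hπmax]
    exact max_lt (((hf.2 a b).1 hab).trans_le (le_max_left _ _))
      (((hg.2 a b).1 hab).trans_le (le_max_right _ _))
  constructor
  · intro a b hab
    exact max_lt ((hf.1 hab).trans_le (le_max_left _ _))
      ((hg.1 hab).trans_le (le_max_right _ _))
  · intro a b
    constructor
    · exact key a b
    · intro h
      rcases lt_trichotomy (ρ a) (ρ b) with h' | h' | h'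
      · exact h'
      · exact absurd (ρ.injective h' ▸ h) (lt_irrefl _)
      · exact absurd h (asymm (key b a h'))


/-- Let `π ∈ I_k`, `ρ` be `k`-rigid, and `f, g` be two embeddings of `ρ` in `π`.
Then for each `x`, `f x` and `g x` have equal rank, hence coincide or form a `12`
pattern (one is weakly earlier and weakly smaller); the pointwise infimum and
supremum maps are again embeddings of `ρ` in `π`; and in particular the set of
embeddings of `ρ` in `π` is (the carrier of) a sublattice of the distributive
lattice `Fin m → Fin n` under these pointwise operations. -/
theorem embeddings_form_distrib_lattice {m n k : ℕ}
    (ρ : Equiv.Perm (Fin m)) (π : Equiv.Perm (Fin n))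
    (hπ : ¬ HasDecSeq π (k + 1)) (hρ : ¬ HasDecSeq ρ (k + 1)) (hrig : KRigid k ρ)
    (f g : Fin m → Fin n) (hf : IsEmbedding ρ π f) (hg : IsEmbedding ρ π g) :
    (∀ x, rankAt π (f x) = rankAt π (g x)) ∧
    (∀ x, (f x ≤ g x ∧ π (f x) ≤ π (g x)) ∨ (g x ≤ f x ∧ π (g x) ≤ π (f x))) ∧
    IsEmbedding ρ π (fun x => min (f x) (g x)) ∧
    IsEmbedding ρ π (fun x => max (f x) (g x)) ∧
    ∃ L : Sublattice (Fin m → Fin n),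
      (L : Set (Fin m → Fin n)) = {h | IsEmbedding ρ π h} := by
  refine ⟨?_, embed_comparable hπ hρ hrig hf hg, min_embedding hπ hρ hrig hf hg,
    max_embedding hπ hρ hrig hf hg, ?_⟩
  · intro x
    rw [rank_preserved hπ hρ hrig hf x, rank_preserved hπ hρ hrig hg x]
  · refine ⟨⟨{h | IsEmbedding ρ π h}, ?_, ?_⟩, rfl⟩
    · intro a ha b hb
      have hab : a ⊔ b = fun x => max (a x) (b x) := by
        funext x
        simp [Pi.sup_apply]
      show IsEmbedding ρ π (a ⊔ b)
      rw [hab]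
      exact max_embedding hπ hρ hrig ha hb
    · intro a ha b hb
      have hab : a ⊓ b = fun x => min (a x) (b x) := by
        funext x
        simp [Pi.inf_apply]
      show IsEmbedding ρ π (a ⊓ b)
      rw [hab]
      exact min_embedding hπ hρ hrig ha hb
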